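/- For every integer m ≥ 1, the minimum over all monic algebraic polynomials P of degree m with all m zeros on the unit circle of the uniform norm of P on the unit circle equals 2. That is, min{ sup_{|z|=1} |P(z)| : P(z) = ∏_{j=1}^m (z - e^{iφ_j}), φ_j ∈ ℝ } = 2. -/

import Mathlib

open Real Complex

section StmtAux
open Polynomial Finset

noncomputable def myF (m : ℕ) (φ : Fin m → ℝ) (t : ℝ) : ℝ :=
  ‖∏ j : Fin m,
    (Complex.exp (t * Complex.I) - Complex.exp ((φ j : ℂ) * Complex.I))‖

lemma myF_bdd (m : ℕ) (φ : Fin m → ℝ) : BddAbove (Set.range (myF m φ)) := by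
  refine ⟨2 ^ m, ?_⟩
  rintro x ⟨t, rfl⟩
  unfold myF
  rw [norm_prod]
  calc ∏ j : Fin m, ‖Complex.exp (t * Complex.I) - Complex.exp ((φ j : ℂ) * Complex.I)‖
      ≤ ∏ _j : Fin m, (2 : ℝ) := by
        apply Finset.prod_le_prod (fun _ _ => norm_nonneg _)
        intro j _
        calc ‖Complex.exp (t * Complex.I) - Complex.exp ((φ j : ℂ) * Complex.I)‖
            ≤ ‖Complex.exp (t * Complex.I)‖ +
              ‖Complex.exp ((φ j : ℂ) * Complex.I)‖ :=
              norm_sub_le _ _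
          _ = 2 := by rw [Complex.norm_exp_ofReal_mul_I, Complex.norm_exp_ofReal_mul_I]; norm_num
    _ = 2 ^ m := by simp

lemma myLower (m : ℕ) (hm : 1 ≤ m) (φ : Fin m → ℝ) : 2 ≤ ⨆ t, myF m φ t := by
  have hbdd := myF_bdd m φ
  have hm0 : m ≠ 0 := Nat.one_le_iff_ne_zero.mp hm
  have hmC : (m : ℂ) ≠ 0 := by exact_mod_cast hm0
  have hmR : (m : ℝ) ≠ 0 := by exact_mod_cast hm0
  set a : Fin m → ℂ := fun j => Complex.exp ((φ j : ℂ) * Complex.I) with ha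
  set Q : Polynomial ℂ := ∏ j : Fin m, (X - C (a j)) with hQ
  have hmonic : Q.Monic := monic_prod_of_monic _ _ fun _ _ => monic_X_sub_C _
  have hdeg : Q.natDegree = m := by
    rw [hQ, natDegree_prod_of_monic _ _ fun _ _ => monic_X_sub_C _]; simp
  set c : ℂ := ∏ j : Fin m, (-(a j)) with hc
  have hc0 : Q.coeff 0 = c := by
    rw [coeff_zero_eq_eval_zero, hQ, eval_prod]; simp [hc]
  have hcm : Q.coeff m = 1 := by rw [← hdeg]; exact hmonic.coeff_natDegree
  have habsc : ‖c‖ = 1 := by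
    rw [hc, norm_prod]
    simp [ha, Complex.norm_exp_ofReal_mul_I]
  have hprim := Complex.isPrimitiveRoot_exp m hm0
  set ζ : ℂ := Complex.exp (2 * π * Complex.I / m) with hζ
  set θ : ℝ := (π * m + ∑ j, φ j) / m with hθ
  set w : ℂ := Complex.exp ((θ : ℂ) * Complex.I) with hw
  have hwm : w ^ m = c := by
    rw [hw, ← Complex.exp_nat_mul]
    have h1 : (m : ℂ) * ((θ : ℂ) * Complex.I) = ((π * m + ∑ j, φ j : ℝ) : ℂ) * Complex.I := by
      rw [hθ]; push_cast; field_simp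
    rw [h1]
    have h2 : Complex.exp ((π : ℂ) * m * Complex.I) = (-1 : ℂ) ^ m := by
      rw [mul_comm (π : ℂ) (m : ℂ), mul_assoc, Complex.exp_nat_mul, Complex.exp_pi_mul_I]
    have h3 : Complex.exp (((∑ j, φ j : ℝ) : ℂ) * Complex.I) = ∏ j : Fin m, a j := by
      push_cast
      rw [Finset.sum_mul, Complex.exp_sum]
    rw [Complex.ofReal_add, add_mul, Complex.exp_add, Complex.ofReal_mul,
      Complex.ofReal_natCast, h2, h3, hc]
    rw [show (∏ j : Fin m, (-(a j))) = ∏ j : Fin m, ((-1) * a j) by simp]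
    rw [Finset.prod_mul_distrib, Finset.prod_const]
    simp
  have hsum : ∑ k ∈ range m, Q.eval (w * ζ ^ k) = 2 * m * c := by
    have hlt : Q.natDegree < m + 1 := by rw [hdeg]; omega
    have h1 : ∀ k, Q.eval (w * ζ ^ k) =
        ∑ j ∈ range (m + 1), Q.coeff j * w ^ j * (ζ ^ j) ^ k := by
      intro k
      rw [eval_eq_sum_range' hlt]
      apply Finset.sum_congr rfl
      intro j _
      rw [mul_pow, ← pow_mul, mul_comm k j, pow_mul, mul_assoc]
    simp_rw [h1]
    rw [Finset.sum_comm]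
    have h2 : ∀ j, ¬ (m ∣ j) → ∑ k ∈ range m, (ζ ^ j) ^ k = 0 := by
      intro j hj
      have hne : ζ ^ j ≠ 1 := fun h => hj ((hprim.pow_eq_one_iff_dvd j).mp h)
      rw [geom_sum_eq hne]
      have : (ζ ^ j) ^ m = 1 := by
        rw [← pow_mul, mul_comm, pow_mul, hprim.pow_eq_one, one_pow]
      rw [this]; simp
    have h3 : ∀ j ∈ range (m + 1),
        (∑ k ∈ range m, Q.coeff j * w ^ j * (ζ ^ j) ^ k)
          = Q.coeff j * w ^ j * ∑ k ∈ range m, (ζ ^ j) ^ k := by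
      intro j _; rw [← Finset.mul_sum]
    rw [Finset.sum_congr rfl h3, Finset.sum_range_succ]
    have hmterm : Q.coeff m * w ^ m * ∑ k ∈ range m, (ζ ^ m) ^ k = m * c := by
      rw [hcm, hwm, hprim.pow_eq_one]
      simp [mul_comm]
    have hrest : ∑ j ∈ range m, Q.coeff j * w ^ j * ∑ k ∈ range m, (ζ ^ j) ^ k = m * c := by
      rw [Finset.sum_eq_single_of_mem 0 (Finset.mem_range.mpr (by omega))]
      · simp [hc0, mul_comm]
      · intro j hjr hj0
        rw [h2 j (fun hdvd => by
          rcases hdvd with ⟨u, rfl⟩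
          rcases Nat.eq_zero_or_pos u with h | h
          · simp [h] at hj0
          · have := Finset.mem_range.mp hjr; nlinarith)]
        ring
    rw [hmterm, hrest]; ring
  have hsum2 : ∑ k ∈ range m, (2 : ℝ) ≤ ∑ k ∈ range m, ‖Q.eval (w * ζ ^ k)‖ := by
    calc ∑ _k ∈ range m, (2 : ℝ) = 2 * m := by simp [mul_comm]
      _ = ‖∑ k ∈ range m, Q.eval (w * ζ ^ k)‖ := by
          rw [hsum, norm_mul, norm_mul, habsc]; simp
      _ ≤ ∑ k ∈ range m, ‖Q.eval (w * ζ ^ k)‖ := norm_sum_le _ _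
  obtain ⟨k, hkmem, hk⟩ := Finset.exists_le_of_sum_le ⟨0, Finset.mem_range.mpr (by omega)⟩ hsum2
  set t : ℝ := θ + 2 * π * k / m with htdef
  have hwz : Complex.exp ((t : ℂ) * Complex.I) = w * ζ ^ k := by
    rw [hw, hζ, ← Complex.exp_nat_mul, ← Complex.exp_add]
    congr 1
    rw [htdef, hθ]
    push_cast
    field_simp
  have hFt : myF m φ t = ‖Q.eval (w * ζ ^ k)‖ := by
    rw [myF, hQ, eval_prod, ← hwz]
    simp [ha]
  have : 2 ≤ myF m φ t := by rw [hFt]; exact hk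
  exact le_trans this (le_ciSup hbdd t)

lemma myMem (m : ℕ) (hm : 1 ≤ m) :
    (2 : ℝ) = ⨆ t, myF m (fun j => 2 * π * j / m) t := by
  have hm0 : m ≠ 0 := Nat.one_le_iff_ne_zero.mp hm
  have hmC : (m : ℂ) ≠ 0 := by exact_mod_cast hm0
  have hprim := Complex.isPrimitiveRoot_exp m hm0
  set ζ : ℂ := Complex.exp (2 * π * Complex.I / m) with hζ
  have key : ∀ t : ℝ, myF m (fun j => 2 * π * j / m) t
      = ‖Complex.exp ((t : ℂ) * Complex.I) ^ m - 1‖ := by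
    intro t
    have hpoly := X_pow_sub_C_eq_prod hprim (Nat.pos_of_ne_zero hm0)
      (α := (1:ℂ)) (a := (1:ℂ)) (one_pow m)
    have heval := congrArg (Polynomial.eval (Complex.exp ((t : ℂ) * Complex.I))) hpoly
    simp only [eval_sub, eval_pow, eval_X, eval_C, eval_prod, eval_mul] at heval
    rw [myF]
    congr 1
    rw [heval, Finset.prod_range fun i => Complex.exp ((t:ℂ)*Complex.I) - ζ ^ i * 1]
    apply Finset.prod_congr rfl
    intro j _
    congr 1
    rw [mul_one, hζ, ← Complex.exp_nat_mul]
    congr 1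
    push_cast
    field_simp
  apply le_antisymm
  · have h2 : 2 ≤ myF m (fun j => 2 * π * j / m) (π / m) := by
      rw [key]
      have : Complex.exp (((π / m : ℝ) : ℂ) * Complex.I) ^ m = -1 := by
        rw [← Complex.exp_nat_mul]
        have : (m : ℂ) * (((π / m : ℝ) : ℂ) * Complex.I) = (π : ℂ) * Complex.I := by
          push_cast; field_simp
        rw [this, Complex.exp_pi_mul_I]
      rw [this]
      norm_num
    exact le_trans h2 (le_ciSup (myF_bdd m _) (π / m))
  · apply ciSup_le
    intro t
    rw [key]
    calc ‖Complex.exp ((t : ℂ) * Complex.I) ^ m - 1‖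
        ≤ ‖Complex.exp ((t : ℂ) * Complex.I) ^ m‖ + ‖(1 : ℂ)‖ :=
          norm_sub_le _ _
      _ = 2 := by
          rw [norm_pow, Complex.norm_exp_ofReal_mul_I, one_pow, norm_one]; norm_num

end StmtAux

theorem stmt_0 (m : ℕ) (hm : 1 ≤ m) :
    IsLeast { M : ℝ | ∃ φ : Fin m → ℝ,
      M = ⨆ t : ℝ, ‖∏ j : Fin m,
        (Complex.exp (t * Complex.I) - Complex.exp ((φ j : ℂ) * Complex.I))‖ } 2 := by
  constructor
  · exact ⟨fun j => 2 * π * j / m, myMem m hm⟩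
  · rintro M ⟨φ, rfl⟩
    exact myLower m hm φ
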